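/- For integers m ≥ 1, L ≥ 0, k ≥ 1: ∑_{n=0}^{L} (-1)^n τ^{n(n+1)/2 - m·n} [L choose n]_τ [n+k-1 choose m-1]_τ = (-1)^L τ^{L(L-2m+1)/2} [k-1 choose m-L-1]_τ, where [N choose n]_τ is the Gaussian binomial coefficient (defined as 0 when n < 0 or n > N, and 1 when n = 0). -/

import Mathlib

/-- The τ-binomial (Gaussian binomial) coefficient
`[N choose n]_τ = ∏_{j=0}^{n-1} (1-τ^{N-j})/(1-τ^{j+1})`, defined to be 0 for n < 0. -/
noncomputable def qbinom (τ : ℝ) (N n : ℤ) : ℝ :=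
  if n < 0 then 0
  else ∏ j ∈ Finset.range n.toNat, (1 - τ ^ (N - (j : ℤ))) / (1 - τ ^ (j + 1))

open Finset

noncomputable def qA (τ : ℝ) (N : ℤ) (s : ℕ) : ℝ := ∏ j ∈ range s, (1 - τ ^ (N - (j : ℤ)))
noncomputable def qD (τ : ℝ) (s : ℕ) : ℝ := ∏ j ∈ range s, (1 - τ ^ (j + 1))

lemma qD_ne {τ : ℝ} (hτ : ∀ j : ℕ, 1 ≤ j → τ ^ j ≠ 1) (s : ℕ) : qD τ s ≠ 0 := by
  refine Finset.prod_ne_zero_iff.mpr fun j _ => sub_ne_zero.mpr ?_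
  exact (hτ (j + 1) (Nat.succ_le_succ (Nat.zero_le _))).symm

lemma qbinom_neg (τ : ℝ) {N n : ℤ} (hn : n < 0) : qbinom τ N n = 0 := by
  simp [qbinom, hn]

lemma qbinom_eq_div (τ : ℝ) (N : ℤ) {n : ℤ} (hn : 0 ≤ n) :
    qbinom τ N n = qA τ N n.toNat / qD τ n.toNat := by
  rw [qbinom, if_neg (not_lt.mpr hn), qA, qD, Finset.prod_div_distrib]

lemma qA_succ (τ : ℝ) (N : ℤ) (s : ℕ) :
    qA τ N (s + 1) = qA τ N s * (1 - τ ^ (N - (s : ℤ))) := prod_range_succ _ _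

lemma qA_shift (τ : ℝ) (hτ0 : τ ≠ 0) (N : ℤ) (s : ℕ) :
    qA τ (N + 1) (s + 1) = (1 - τ ^ (N + 1)) * qA τ N s := by
  rw [qA, prod_range_succ']
  have h : ∀ j : ℕ, N + 1 - ((j : ℤ) + 1) = N - j := fun j => by ring
  simp only [Nat.cast_add, Nat.cast_one, Nat.cast_zero, h, sub_zero]
  rw [mul_comm, qA]

lemma qD_succ (τ : ℝ) (s : ℕ) : qD τ (s + 1) = qD τ s * (1 - τ ^ (s + 1)) := prod_range_succ _ _

lemma qbinom_pascal1 {τ : ℝ} (hτ0 : τ ≠ 0) (hτ : ∀ j : ℕ, 1 ≤ j → τ ^ j ≠ 1) (N n : ℤ) :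
    qbinom τ (N + 1) n = qbinom τ N n + τ ^ (N + 1 - n) * qbinom τ N (n - 1) := by
  rcases lt_or_ge n 0 with hn | hn
  · rw [qbinom_neg τ hn, qbinom_neg τ hn, qbinom_neg τ (by omega)]
    ring
  rcases eq_or_lt_of_le hn with hn0 | hn1
  · rw [← hn0]
    rw [qbinom_neg τ (show (0:ℤ) - 1 < 0 by norm_num)]
    simp [qbinom]
  · -- n ≥ 1
    obtain ⟨s, rfl⟩ : ∃ s : ℕ, n = (s : ℤ) + 1 := ⟨(n - 1).toNat, by omega⟩
    have ht1 : ((s : ℤ) + 1).toNat = s + 1 := by omega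
    have ht0 : ((s : ℤ) + 1 - 1).toNat = s := by omega
    rw [qbinom_eq_div τ _ hn, qbinom_eq_div τ _ hn, qbinom_eq_div τ _ (show (0:ℤ) ≤ (s:ℤ)+1-1 by omega),
      ht1, ht0, qA_shift τ hτ0, qA_succ, qD_succ]
    have hDs := qD_ne hτ s
    have hds : (1 : ℝ) - τ ^ (s + 1) ≠ 0 := sub_ne_zero.mpr (hτ (s+1) (by omega)).symm
    have hexp : τ ^ (N - (s:ℤ)) * τ ^ ((s:ℕ) + 1) = τ ^ (N + 1) := by
      rw [← zpow_natCast τ (s + 1), ← zpow_add₀ hτ0]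
      congr 1; push_cast; ring
    have hexp2 : τ ^ (N + 1 - ((s:ℤ) + 1)) = τ ^ (N - (s:ℤ)) := by
      congr 1; ring
    rw [hexp2, ← hexp]
    field_simp
    ring

lemma qbinom_pascal2 {τ : ℝ} (hτ0 : τ ≠ 0) (hτ : ∀ j : ℕ, 1 ≤ j → τ ^ j ≠ 1) (N n : ℤ) :
    qbinom τ (N + 1) n = τ ^ n * qbinom τ N n + qbinom τ N (n - 1) := by
  rcases lt_or_ge n 0 with hn | hn
  · rw [qbinom_neg τ hn, qbinom_neg τ hn, qbinom_neg τ (by omega)]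
    ring
  rcases eq_or_lt_of_le hn with hn0 | hn1
  · rw [← hn0]
    rw [qbinom_neg τ (show (0:ℤ) - 1 < 0 by norm_num)]
    simp [qbinom]
  · obtain ⟨s, rfl⟩ : ∃ s : ℕ, n = (s : ℤ) + 1 := ⟨(n - 1).toNat, by omega⟩
    have ht1 : ((s : ℤ) + 1).toNat = s + 1 := by omega
    have ht0 : ((s : ℤ) + 1 - 1).toNat = s := by omega
    rw [qbinom_eq_div τ _ hn, qbinom_eq_div τ _ hn, qbinom_eq_div τ _ (show (0:ℤ) ≤ (s:ℤ)+1-1 by omega),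
      ht1, ht0, qA_shift τ hτ0, qA_succ, qD_succ]
    have hDs := qD_ne hτ s
    have hds : (1 : ℝ) - τ ^ (s + 1) ≠ 0 := sub_ne_zero.mpr (hτ (s+1) (by omega)).symm
    have hz : τ ^ ((s:ℤ) + 1) = τ ^ ((s:ℕ) + 1) := by
      rw [← zpow_natCast τ (s + 1)]; norm_cast
    have hexp : τ ^ ((s:ℕ) + 1) * τ ^ (N - (s:ℤ)) = τ ^ (N + 1) := by
      rw [← hz, ← zpow_add₀ hτ0]; congr 1; ring
    rw [hz, ← hexp]
    field_simp
    ring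
lemma qbinom_zero_of_lt (τ : ℝ) (N : ℕ) {n : ℤ} (h : (N : ℤ) < n) : qbinom τ (N : ℤ) n = 0 := by
  rw [qbinom, if_neg (by omega)]
  refine Finset.prod_eq_zero (i := N) (Finset.mem_range.mpr (by omega)) ?_
  simp

theorem q_gauss_identity (τ : ℝ) (hτ0 : τ ≠ 0) (hτ : ∀ j : ℕ, 1 ≤ j → τ ^ j ≠ 1)
    (m L k : ℕ) (hm : 1 ≤ m) (hk : 1 ≤ k) :
    ∑ n ∈ Finset.range (L + 1),
        (-1 : ℝ) ^ n * τ ^ (((n * (n + 1) / 2 : ℕ) : ℤ) - (m : ℤ) * n)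
          * qbinom τ (L : ℤ) (n : ℤ) * qbinom τ ((n : ℤ) + k - 1) ((m : ℤ) - 1)
      = (-1 : ℝ) ^ L * τ ^ (((L * (L + 1) / 2 : ℕ) : ℤ) - (m : ℤ) * L)
          * qbinom τ ((k : ℤ) - 1) ((m : ℤ) - (L : ℤ) - 1) := by
  induction L generalizing k with
  | zero =>
    rw [Finset.sum_range_one]
    norm_num [qbinom]
  | succ L ih =>
    have hL1 : ((L + 1 : ℕ) : ℤ) = (L : ℤ) + 1 := by push_cast; ring
    -- split via Pascal
    have e1 : ∑ n ∈ Finset.range (L + 1 + 1),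
        (-1 : ℝ) ^ n * τ ^ (((n * (n + 1) / 2 : ℕ) : ℤ) - (m : ℤ) * n)
          * qbinom τ ((L + 1 : ℕ) : ℤ) (n : ℤ) * qbinom τ ((n : ℤ) + k - 1) ((m : ℤ) - 1)
      = (∑ n ∈ Finset.range (L + 1 + 1),
        (-1 : ℝ) ^ n * τ ^ (((n * (n + 1) / 2 : ℕ) : ℤ) - (m : ℤ) * n)
          * qbinom τ ((L : ℕ) : ℤ) (n : ℤ) * qbinom τ ((n : ℤ) + k - 1) ((m : ℤ) - 1))
      + (∑ n ∈ Finset.range (L + 1 + 1),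
        (-1 : ℝ) ^ n * τ ^ (((n * (n + 1) / 2 : ℕ) : ℤ) - (m : ℤ) * n)
          * (τ ^ ((L : ℤ) + 1 - (n : ℤ)) * qbinom τ ((L : ℕ) : ℤ) ((n : ℤ) - 1))
          * qbinom τ ((n : ℤ) + k - 1) ((m : ℤ) - 1)) := by
      rw [← Finset.sum_add_distrib]
      refine Finset.sum_congr rfl fun n _ => ?_
      rw [hL1, qbinom_pascal1 hτ0 hτ]
      ring
    have e2 : ∑ n ∈ Finset.range (L + 1 + 1),
        (-1 : ℝ) ^ n * τ ^ (((n * (n + 1) / 2 : ℕ) : ℤ) - (m : ℤ) * n)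
          * qbinom τ ((L : ℕ) : ℤ) (n : ℤ) * qbinom τ ((n : ℤ) + k - 1) ((m : ℤ) - 1)
      = ∑ n ∈ Finset.range (L + 1),
        (-1 : ℝ) ^ n * τ ^ (((n * (n + 1) / 2 : ℕ) : ℤ) - (m : ℤ) * n)
          * qbinom τ ((L : ℕ) : ℤ) (n : ℤ) * qbinom τ ((n : ℤ) + k - 1) ((m : ℤ) - 1) := by
      rw [Finset.sum_range_succ,
        qbinom_zero_of_lt τ L (show (L : ℤ) < ((L + 1 : ℕ) : ℤ) by omega)]
      ring
    have e3 : ∑ n ∈ Finset.range (L + 1 + 1),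
        (-1 : ℝ) ^ n * τ ^ (((n * (n + 1) / 2 : ℕ) : ℤ) - (m : ℤ) * n)
          * (τ ^ ((L : ℤ) + 1 - (n : ℤ)) * qbinom τ ((L : ℕ) : ℤ) ((n : ℤ) - 1))
          * qbinom τ ((n : ℤ) + k - 1) ((m : ℤ) - 1)
      = -(τ ^ ((L : ℤ) + 1 - (m : ℤ))) * ∑ j ∈ Finset.range (L + 1),
        (-1 : ℝ) ^ j * τ ^ (((j * (j + 1) / 2 : ℕ) : ℤ) - (m : ℤ) * j)
          * qbinom τ ((L : ℕ) : ℤ) (j : ℤ) * qbinom τ ((j : ℤ) + (k + 1 : ℕ) - 1) ((m : ℤ) - 1) := by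
      rw [Finset.sum_range_succ', Finset.mul_sum]
      have h0 : qbinom τ ((L : ℕ) : ℤ) (((0 : ℕ) : ℤ) - 1) = 0 := qbinom_neg τ (by norm_num)
      rw [h0]
      rw [show ((-1 : ℝ) ^ (0:ℕ) * τ ^ ((((0:ℕ) * ((0:ℕ) + 1) / 2 : ℕ) : ℤ) - (m : ℤ) * (0:ℕ))
          * (τ ^ ((L : ℤ) + 1 - ((0:ℕ) : ℤ)) * 0) * qbinom τ (((0:ℕ) : ℤ) + k - 1) ((m : ℤ) - 1)) = 0 by ring,
        add_zero]
      refine Finset.sum_congr rfl fun j _ => ?_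
      have hT : ((j + 1) * (j + 1 + 1) / 2 : ℕ) = (j * (j + 1) / 2) + (j + 1) := by
        obtain ⟨c, hc⟩ := Nat.even_mul_succ_self j
        have hmul : (j + 1) * (j + 1 + 1) = j * (j + 1) + 2 * (j + 1) := by ring
        omega
      have hpow : τ ^ ((((j + 1) * (j + 1 + 1) / 2 : ℕ) : ℤ) - (m : ℤ) * ((j + 1 : ℕ) : ℤ))
            * τ ^ ((L : ℤ) + 1 - ((j + 1 : ℕ) : ℤ))
          = τ ^ ((L : ℤ) + 1 - (m : ℤ)) * τ ^ (((j * (j + 1) / 2 : ℕ) : ℤ) - (m : ℤ) * (j : ℤ)) := by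
        rw [← zpow_add₀ hτ0, ← zpow_add₀ hτ0]
        congr 1
        rw [hT]
        push_cast
        ring
      have harg1 : ((j + 1 : ℕ) : ℤ) - 1 = (j : ℤ) := by push_cast; ring
      have harg2 : ((j + 1 : ℕ) : ℤ) + (k : ℤ) - 1 = (j : ℤ) + ((k + 1 : ℕ) : ℤ) - 1 := by
        push_cast; ring
      rw [harg1, harg2]
      have hs : (-1 : ℝ) ^ (j + 1) = -(-1 : ℝ) ^ j := by ring
      rw [hs]
      linear_combination (-(-1 : ℝ) ^ j * qbinom τ ((L : ℕ) : ℤ) (j : ℤ)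
        * qbinom τ ((j : ℤ) + ((k + 1 : ℕ) : ℤ) - 1) ((m : ℤ) - 1)) * hpow
    rw [e1, e2, e3, ih k hk, ih (k + 1) (by omega)]
    -- now pure algebra with Pascal 2 on the k-side
    have hb : ((k + 1 : ℕ) : ℤ) - 1 = ((k : ℤ) - 1) + 1 := by push_cast; ring
    rw [hb, qbinom_pascal2 hτ0 hτ]
    have hp1 : τ ^ ((L : ℤ) + 1 - (m : ℤ)) * τ ^ ((m : ℤ) - (L : ℤ) - 1) = 1 := by
      rw [← zpow_add₀ hτ0, show (L : ℤ) + 1 - (m : ℤ) + ((m : ℤ) - (L : ℤ) - 1) = 0 by ring,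
        zpow_zero]
    have hT' : ((L + 1) * (L + 1 + 1) / 2 : ℕ) = (L * (L + 1) / 2) + (L + 1) := by
      obtain ⟨c, hc⟩ := Nat.even_mul_succ_self L
      have hmul : (L + 1) * (L + 1 + 1) = L * (L + 1) + 2 * (L + 1) := by ring
      omega
    have hp2 : τ ^ ((L : ℤ) + 1 - (m : ℤ)) * τ ^ (((L * (L + 1) / 2 : ℕ) : ℤ) - (m : ℤ) * (L : ℤ))
        = τ ^ ((((L + 1) * (L + 1 + 1) / 2 : ℕ) : ℤ) - (m : ℤ) * ((L + 1 : ℕ) : ℤ)) := by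
      rw [← zpow_add₀ hτ0]
      congr 1
      rw [hT']
      push_cast
      ring
    have hb2 : (m : ℤ) - ((L + 1 : ℕ) : ℤ) - 1 = ((m : ℤ) - (L : ℤ) - 1) - 1 := by push_cast; ring
    rw [hb2]
    have hs2 : (-1 : ℝ) ^ (L + 1) = -(-1 : ℝ) ^ L := by ring
    rw [hs2]
    linear_combination (-((-1 : ℝ) ^ L * τ ^ (((L * (L + 1) / 2 : ℕ) : ℤ) - (m : ℤ) * (L : ℤ))
        * qbinom τ ((k : ℤ) - 1) ((m : ℤ) - (L : ℤ) - 1))) * hp1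
      + (-((-1 : ℝ) ^ L * qbinom τ ((k : ℤ) - 1) (((m : ℤ) - (L : ℤ) - 1) - 1))) * hp2
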